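/- With a(t) = (16t^4+64t^3+76t^2+24t-1)/(16(2t^2+4t+1)(t+1)) and b(t) = 16t(t+1)(t+2)(2t^2+4t+1)/(16t^4+64t^3+76t^2+24t-1), for every rational t where denominators are nonzero, a(t)·b(t)+1 is a square of a rational number. -/

import Mathlib

theorem stmt_11 (t : ℚ)
    (ht : (2 * t ^ 2 + 4 * t + 1) * (t + 1) *
      (16 * t ^ 4 + 64 * t ^ 3 + 76 * t ^ 2 + 24 * t - 1) ≠ 0)
    (a b : ℚ)
    (ha : a = (16 * t ^ 4 + 64 * t ^ 3 + 76 * t ^ 2 + 24 * t - 1) /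
      (16 * (2 * t ^ 2 + 4 * t + 1) * (t + 1)))
    (hb : b = 16 * t * (t + 1) * (t + 2) * (2 * t ^ 2 + 4 * t + 1) /
      (16 * t ^ 4 + 64 * t ^ 3 + 76 * t ^ 2 + 24 * t - 1)) :
    ∃ y : ℚ, a * b + 1 = y ^ 2 := by
  have h1 : (2 * t ^ 2 + 4 * t + 1) ≠ 0 := fun h => ht (by rw [h]; ring)
  have h2 : (t + 1) ≠ 0 := fun h => ht (by rw [h]; ring)
  have h3 : (16 * t ^ 4 + 64 * t ^ 3 + 76 * t ^ 2 + 24 * t - 1) ≠ 0 :=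
    fun h => ht (by rw [h]; ring)
  refine ⟨t + 1, ?_⟩
  subst ha hb
  field_simp
  have h4 : (t * (t * (t * (16 * t + 64) + 76) + 24) - 1) * (t * (t * 2 + 4) + 1) ≠ 0 := by
    convert mul_ne_zero h3 h1 using 1; ring
  rw [div_add_one h4, div_eq_iff h4]
  ring
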